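/- The functions H(M,γ) = ½ M·I⁻¹M, C₁(M,γ) = ½ γ·γ, C₂(M,γ) = (M+μ)·γ, and F(M,γ) = ½(M+μ)·(M+μ) are conserved quantities of the system Ṁ = (M+μ) × I⁻¹M, γ̇ = γ × I⁻¹M: along any solution, each of H, C₁, C₂, F is constant in time. -/

import Mathlib

open Matrix in
private lemma hasDerivAt_dotProduct' {f g : ℝ → Fin 3 → ℝ} {f' g' : Fin 3 → ℝ} {t : ℝ}
    (hf : HasDerivAt f f' t) (hg : HasDerivAt g g' t) :
    HasDerivAt (fun s => f s ⬝ᵥ g s) (f' ⬝ᵥ g t + f t ⬝ᵥ g') t := by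
  simp only [dotProduct, ← Finset.sum_add_distrib]
  exact HasDerivAt.fun_sum fun i _ =>
    ((hasDerivAt_pi.1 hf i).mul (hasDerivAt_pi.1 hg i))

open Matrix in
private lemma hasDerivAt_mulVec' {A : Matrix (Fin 3) (Fin 3) ℝ} {f : ℝ → Fin 3 → ℝ}
    {f' : Fin 3 → ℝ} {t : ℝ} (hf : HasDerivAt f f' t) :
    HasDerivAt (fun s => A.mulVec (f s)) (A.mulVec f') t := by
  refine hasDerivAt_pi.2 fun i => ?_
  simp only [Matrix.mulVec, dotProduct]
  exact HasDerivAt.fun_sum fun j _ => (hasDerivAt_pi.1 hf j).const_mul (A i j)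

private lemma const_of_hasDerivAt_zero {f : ℝ → ℝ} (h : ∀ t, HasDerivAt f 0 t) (t : ℝ) :
    f t = f 0 :=
  is_const_of_deriv_eq_zero (fun s => (h s).differentiableAt)
    (fun s => (h s).deriv) t 0

open Matrix in
theorem conserved_quantities_zhukovski
    (I : Matrix (Fin 3) (Fin 3) ℝ) (hI : Invertible I) (hsym : I.IsSymm)
    (μ : Fin 3 → ℝ) (M γ : ℝ → Fin 3 → ℝ)
    (hM : ∀ t, HasDerivAt M (crossProduct (M t + μ) (I⁻¹.mulVec (M t))) t)
    (hγ : ∀ t, HasDerivAt γ (crossProduct (γ t) (I⁻¹.mulVec (M t))) t) :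
    ∀ t : ℝ,
      (1/2) * (M t ⬝ᵥ I⁻¹.mulVec (M t)) = (1/2) * (M 0 ⬝ᵥ I⁻¹.mulVec (M 0)) ∧
      (1/2) * (γ t ⬝ᵥ γ t) = (1/2) * (γ 0 ⬝ᵥ γ 0) ∧
      (M t + μ) ⬝ᵥ γ t = (M 0 + μ) ⬝ᵥ γ 0 ∧
      (1/2) * ((M t + μ) ⬝ᵥ (M t + μ)) = (1/2) * ((M 0 + μ) ⬝ᵥ (M 0 + μ)) := by
  have hAsymm : I⁻¹ᵀ = I⁻¹ := by
    rw [Matrix.transpose_nonsing_inv, hsym.eq]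
  have hsw : ∀ v w : Fin 3 → ℝ, v ⬝ᵥ I⁻¹.mulVec w = w ⬝ᵥ I⁻¹.mulVec v := by
    intro v w
    rw [Matrix.dotProduct_mulVec, ← Matrix.mulVec_transpose, hAsymm, dotProduct_comm]
  have hMμ : ∀ t, HasDerivAt (fun s => M s + μ)
      (crossProduct (M t + μ) (I⁻¹.mulVec (M t))) t := by
    intro t
    simpa using (hM t).add_const μ
  intro t
  refine ⟨?_, ?_, ?_, ?_⟩
  · refine congrArg (1/2 * ·) (const_of_hasDerivAt_zero (f := fun s => M s ⬝ᵥ I⁻¹.mulVec (M s)) (fun s => ?_) t)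
    have := hasDerivAt_dotProduct' (hM s) (hasDerivAt_mulVec' (A := I⁻¹) (hM s))
    convert this using 1
    rw [hsw (M s)]
    have h1 : crossProduct (M s + μ) (I⁻¹.mulVec (M s)) ⬝ᵥ I⁻¹.mulVec (M s) = 0 := by
      rw [dotProduct_comm]; exact dot_cross_self _ _
    rw [h1]; ring
  · refine congrArg (1/2 * ·) (const_of_hasDerivAt_zero (f := fun s => γ s ⬝ᵥ γ s) (fun s => ?_) t)
    have := hasDerivAt_dotProduct' (hγ s) (hγ s)
    convert this using 1
    have h1 : crossProduct (γ s) (I⁻¹.mulVec (M s)) ⬝ᵥ γ s = 0 := by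
      rw [dotProduct_comm]; exact dot_self_cross _ _
    rw [h1, dotProduct_comm, h1]; ring
  · refine const_of_hasDerivAt_zero (f := fun s => (M s + μ) ⬝ᵥ γ s) (fun s => ?_) t
    have := hasDerivAt_dotProduct' (hMμ s) (hγ s)
    convert this using 1
    rw [dotProduct_comm _ (γ s), triple_product_permutation (M s + μ),
      triple_product_permutation (γ s), ← cross_anticomm, dotProduct_neg,
      triple_product_permutation (γ s) (I⁻¹ *ᵥ M s) (M s + μ),
      triple_product_permutation (I⁻¹ *ᵥ M s)]
    ring
  · refine congrArg (1/2 * ·) (const_of_hasDerivAt_zero (f := fun s => (M s + μ) ⬝ᵥ (M s + μ)) (fun s => ?_) t)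
    have := hasDerivAt_dotProduct' (hMμ s) (hMμ s)
    convert this using 1
    rw [dotProduct_comm, dot_self_cross]
    ring
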